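/- For any k ≥ 1, a permutation has exactly 2^(k−1) preimages under the bubblesort operator B if and only if it ends with its maximum and has exactly k left-to-right maxima. -/

import Mathlib

/-- One pass of bubblesort on a list of naturals. -/
def bpass : List ℕ → List ℕ
  | [] => []
  | [a] => [a]
  | a :: b :: l => if b < a then b :: bpass (a :: l) else a :: bpass (b :: l)

/-- The identity permutation 1 2 ... n as a list. -/
def idList (n : ℕ) : List ℕ := List.map (· + 1) (List.range n)

/-- `l` is (the word of) a permutation of size `n`, i.e. a rearrangement of 1,...,n. -/
def IsPermList (n : ℕ) (l : List ℕ) : Prop := l.Perm (idList n)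

/-- position `j` of `l` holds a left-to-right maximum. -/
def IsLTRMax (l : List ℕ) (j : ℕ) : Prop :=
  j < l.length ∧ ∀ i < j, l.getD i 0 < l.getD j 0

instance (l : List ℕ) (j : ℕ) : Decidable (IsLTRMax l j) := by
  unfold IsLTRMax; infer_instance

/-- the number of left-to-right maxima of `l`. -/
def ltrCount (l : List ℕ) : ℕ :=
  ((List.range l.length).filter fun j => decide (IsLTRMax l j)).length

/-- the length of the longest suffix of `l` consisting of left-to-right maxima. -/
def suffLen (l : List ℕ) : ℕ :=
  ((List.range l.length).takeWhile fun j => decide (IsLTRMax l (l.length - 1 - j))).length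

/-- `σ` is a node of the tree `T(π)` of iterated bubblesort preimages. -/
def IsNode (n : ℕ) (π σ : List ℕ) : Prop :=
  IsPermList n σ ∧ ∃ j, bpass^[j] σ = π

/-- `σ` is a node of `T(π)` at height `j` (j passes needed to reach π, and no fewer). -/
def IsNodeAt (n : ℕ) (π σ : List ℕ) (j : ℕ) : Prop :=
  IsPermList n σ ∧ bpass^[j] σ = π ∧ ∀ i < j, bpass^[i] σ ≠ π

/-- `τ` is a leaf: it has no child, i.e. no bubblesort preimage other than itself. -/
def IsLeafNode (n : ℕ) (τ : List ℕ) : Prop :=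
  ¬ ∃ ρ, IsPermList n ρ ∧ ρ ≠ τ ∧ bpass ρ = τ

/-- `T(π)` and `T(τ)` are isomorphic as rooted trees: there is a bijection between
their node sets sending root to root and commuting with the parent map `bpass`. -/
def TreeIso (n : ℕ) (π τ : List ℕ) : Prop :=
  ∃ φ : List ℕ → List ℕ,
    (∀ σ, IsNode n π σ → IsNode n τ (φ σ)) ∧
    (∀ σ σ', IsNode n π σ → IsNode n π σ' → φ σ = φ σ' → σ = σ') ∧
    (∀ ρ, IsNode n τ ρ → ∃ σ, IsNode n π σ ∧ φ σ = ρ) ∧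
    φ π = τ ∧
    (∀ σ, IsNode n π σ → σ ≠ π → φ (bpass σ) = bpass (φ σ))

theorem bpass_perm : ∀ l : List ℕ, (bpass l).Perm l := by
  intro l
  induction l using bpass.induct with
  | case1 => simp [bpass]
  | case2 a => simp [bpass]
  | case3 a b l h ih =>
      simp only [bpass, if_pos h]
      exact (ih.cons b).trans (List.Perm.swap a b l)
  | case4 a b l h ih =>
      simp only [bpass, if_neg h]
      exact ih.cons a

def ltr (t : ℕ) : List ℕ → ℕ
  | [] => 0
  | a :: l => (if t < a then 1 else 0) + ltr (max t a) l

def P (t : ℕ) : List ℕ → List (List ℕ)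
  | [] => []
  | [a] => if t < a then [[a]] else []
  | c :: s :: l =>
      (if t < c then (P c (s :: l)).map (c :: ·) else []) ++
        (P (max t c) (s :: l)).map (fun ρ => ρ.headI :: c :: ρ.tail)

theorem mem_P : ∀ (σ : List ℕ), σ.Nodup → ∀ t τ, τ ∈ P t σ ↔ (bpass τ = σ ∧ t < τ.headI) := by
  intro σ
  induction σ with
  | nil =>
      intro _ t τ
      simp only [P, List.not_mem_nil, false_iff, not_and]
      intro h
      have : τ = [] := by
        cases τ with
        | nil => rfl
        | cons a l =>
          cases l with
          | nil => simp [bpass] at h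
          | cons b l2 => simp only [bpass] at h; split at h <;> simp at h
      subst this; simp [List.headI]
  | cons c σ' ih =>
      cases σ' with
      | nil =>
          intro _ t τ
          constructor
          · intro hm
            by_cases h : t < c
            · simp [P, if_pos h] at hm; subst hm; exact ⟨by simp [bpass], h⟩
            · simp [P, if_neg h] at hm
          · rintro ⟨h1, h2⟩
            have : τ = [c] := by
              cases τ with
              | nil => simp [bpass] at h1
              | cons x l =>
                cases l with
                | nil => simp [bpass] at h1; subst h1; rfl
                | cons y l2 =>
                  exfalso
                  have hlen := (bpass_perm (x :: y :: l2)).length_eq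
                  rw [h1] at hlen
                  simp at hlen
            subst this
            simp only [List.headI] at h2
            simp [P, if_pos h2]
      | cons s l =>
          intro hnd t τ
          have hnd' : (s :: l).Nodup := hnd.of_cons
          have hc : c ∉ s :: l := (List.nodup_cons.mp hnd).1
          constructor
          · -- membership → bpass
            intro hm
            simp only [P, List.mem_append] at hm
            rcases hm with hm | hm
            · by_cases h : t < c
              · rw [if_pos h, List.mem_map] at hm
                obtain ⟨ρ, hρ, rfl⟩ := hm
                rw [ih hnd' c ρ] at hρ
                obtain ⟨hb, hh⟩ := hρ
                have hρne : ρ ≠ [] := by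
                  intro he; rw [he] at hb; simp [bpass] at hb
                obtain ⟨h1, tl, rfl⟩ := List.exists_cons_of_ne_nil hρne
                simp only [List.headI] at hh
                refine ⟨?_, by simpa using h⟩
                simp only [bpass, if_neg (by omega : ¬ h1 < c)]
                rw [hb]
              · rw [if_neg h] at hm; simp at hm
            · rw [List.mem_map] at hm
              obtain ⟨ρ, hρ, rfl⟩ := hm
              rw [ih hnd' _ ρ] at hρ
              obtain ⟨hb, hh⟩ := hρ
              have hρne : ρ ≠ [] := by
                intro he; rw [he] at hb; simp [bpass] at hb
              obtain ⟨h1, tl, rfl⟩ := List.exists_cons_of_ne_nil hρne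
              simp only [List.headI] at hh ⊢
              rw [Nat.max_lt] at hh
              refine ⟨?_, by simpa using hh.1⟩
              simp only [List.tail_cons, bpass, if_pos hh.2]
              rw [hb]
          · -- bpass → membership
            rintro ⟨h1, h2⟩
            cases τ with
            | nil => simp [bpass] at h1
            | cons x m =>
              cases m with
              | nil =>
                  simp [bpass] at h1
              | cons y m2 =>
                  simp only [List.headI] at h2
                  simp only [bpass] at h1
                  by_cases hlt : y < x
                  · rw [if_pos hlt] at h1
                    have hy : y = c := (List.cons.injEq _ _ _ _ ▸ h1).1
                    have hb : bpass (x :: m2) = s :: l := (List.cons.injEq _ _ _ _ ▸ h1).2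
                    subst hy
                    simp only [P, List.mem_append]
                    right
                    rw [List.mem_map]
                    refine ⟨x :: m2, ?_, by simp⟩
                    rw [ih hnd' _ _]
                    exact ⟨hb, by simp [List.headI]; omega⟩
                  · rw [if_neg hlt] at h1
                    have hx : x = c := (List.cons.injEq _ _ _ _ ▸ h1).1
                    have hb : bpass (y :: m2) = s :: l := (List.cons.injEq _ _ _ _ ▸ h1).2
                    subst hx
                    simp only [P, List.mem_append]
                    left
                    rw [if_pos h2, List.mem_map]
                    refine ⟨y :: m2, ?_, by simp⟩
                    rw [ih hnd' _ _]
                    refine ⟨hb, ?_⟩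
                    have hyne : y ≠ x := by
                      intro he
                      apply hc
                      have hy : y ∈ s :: l := by
                        rw [← hb]
                        exact (bpass_perm _).mem_iff.mpr (by simp)
                      rwa [he] at hy
                    simp only [List.headI]
                    omega

theorem ne_nil_of_mem_P {σ : List ℕ} (hσ : σ ≠ []) (hnd : σ.Nodup) {t τ} (h : τ ∈ P t σ) :
    τ ≠ [] := by
  intro he
  rw [mem_P σ hnd] at h
  rw [he] at h
  apply hσ
  rw [← h.1]
  simp [bpass]

theorem nodup_P : ∀ (σ : List ℕ), σ.Nodup → ∀ t, (P t σ).Nodup := by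
  intro σ
  induction σ with
  | nil => intro _ t; simp [P]
  | cons c σ' ih =>
      cases σ' with
      | nil =>
          intro _ t
          by_cases h : t < c <;> simp [P, h]
      | cons s l =>
          intro hnd t
          have hnd' : (s :: l).Nodup := hnd.of_cons
          simp only [P]
          apply List.Nodup.append
          · split
            · exact ((ih hnd' c).map (fun a b => by simp))
            · simp
          · refine List.Nodup.map_on ?_ (ih hnd' (max t c))
            intro ρ hρ ρ' hρ' he
            have h1 := ne_nil_of_mem_P (by simp) hnd' hρ
            have h2 := ne_nil_of_mem_P (by simp) hnd' hρ'
            obtain ⟨a, m, rfl⟩ := List.exists_cons_of_ne_nil h1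
            obtain ⟨a', m', rfl⟩ := List.exists_cons_of_ne_nil h2
            simpa using he
          · intro τ h1 h2
            split at h1
            · rw [List.mem_map] at h1 h2
              obtain ⟨ρ, hρ, rfl⟩ := h1
              obtain ⟨ρ', hρ', he⟩ := h2
              have h2' := ne_nil_of_mem_P (by simp) hnd' hρ'
              obtain ⟨a', m', rfl⟩ := List.exists_cons_of_ne_nil h2'
              rw [mem_P _ hnd'] at hρ'
              have : max t c < a' := by simpa [List.headI] using hρ'.2
              simp only [List.headI, List.tail_cons] at he
              have : a' = c := by
                have := List.cons.injEq a' (c :: m') c ρ ▸ he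
                exact (List.cons.injEq _ _ _ _ ▸ he).1
              omega
            · simp at h1

theorem ltr_pos : ∀ (l : List ℕ) (t x : ℕ), x ∈ l → t < x → 1 ≤ ltr t l := by
  intro l
  induction l with
  | nil => simp
  | cons a l ih =>
      intro t x hx htx
      by_cases h : t < a
      · simp [ltr, h]
      · have hta : max t a = t := by omega
        simp only [ltr, if_neg h, hta]
        rcases List.mem_cons.mp hx with rfl | hx'
        · omega
        · simpa using ih t x hx' htx

theorem count_P : ∀ (σ : List ℕ), σ.Nodup → ∀ t m, σ.getLast? = some m →
    (P t σ).length = if t < m ∧ ∀ x ∈ σ, x ≤ m then 2 ^ (ltr t σ - 1) else 0 := by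
  intro σ
  induction σ with
  | nil => intro _ t m hm; simp at hm
  | cons c σ' ih =>
      cases σ' with
      | nil =>
          intro _ t m hm
          simp only [List.getLast?_singleton, Option.some.injEq] at hm
          subst hm
          by_cases h : t < c <;>
            simp [P, ltr, h]
      | cons s l =>
          intro hnd t m hm
          have hnd' : (s :: l).Nodup := hnd.of_cons
          have hc : c ∉ s :: l := (List.nodup_cons.mp hnd).1
          have hm' : (s :: l).getLast? = some m := by
            rwa [List.getLast?_cons_cons] at hm
          have hmmem : m ∈ s :: l := by
            obtain ⟨h, he⟩ := List.mem_getLast?_eq_getLast (Option.mem_def.mpr hm')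
            exact he ▸ List.getLast_mem h
          have hcm : c ≠ m := fun he => hc (he ▸ hmmem)
          have IH1 := ih hnd' c m hm'
          have IH2 := ih hnd' (max t c) m hm'
          have len1 : (if t < c then (P c (s :: l)).map (c :: ·) else []).length
              = if t < c then (P c (s :: l)).length else 0 := by
            split <;> simp
          have ltr1 : ltr t (c :: s :: l)
              = (if t < c then 1 else 0) + ltr (max t c) (s :: l) := rfl
          simp only [P, List.length_append, List.length_map]
          rw [len1, ltr1]
          by_cases hA : ∀ x ∈ s :: l, x ≤ m
          · by_cases hcm' : c < m
            · have hall : ∀ x ∈ c :: s :: l, x ≤ m := by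
                intro x hx
                rcases List.mem_cons.mp hx with he | h
                · omega
                · exact hA x h
              by_cases htc : t < c
              · have htm : t < m := htc.trans hcm'
                have hmx : max t c = c := by omega
                rw [hmx, IH1]
                simp only [if_pos htc,
                  if_pos (show c < m ∧ ∀ x ∈ s :: l, x ≤ m from ⟨hcm', hA⟩),
                  if_pos (show t < m ∧ ∀ x ∈ c :: s :: l, x ≤ m from ⟨htm, hall⟩)]
                have h1 : 1 ≤ ltr c (s :: l) := ltr_pos _ c m hmmem hcm'
                have he : 1 + ltr c (s :: l) - 1 = (ltr c (s :: l) - 1) + 1 := by omega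
                rw [he, pow_succ]
                ring
              · have hmx : max t c = t := by omega
                rw [hmx] at IH2
                rw [hmx, IH2]
                simp only [if_neg htc, Nat.zero_add]
                by_cases htm : t < m
                · simp only [if_pos (show t < m ∧ ∀ x ∈ s :: l, x ≤ m from ⟨htm, hA⟩),
                    if_pos (show t < m ∧ ∀ x ∈ c :: s :: l, x ≤ m from ⟨htm, hall⟩)]
                · simp only [if_neg (show ¬(t < m ∧ ∀ x ∈ s :: l, x ≤ m) from
                      fun h => htm h.1),
                    if_neg (show ¬(t < m ∧ ∀ x ∈ c :: s :: l, x ≤ m) from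
                      fun h => htm h.1)]
            · have hmc : m < c := by omega
              have c1 : ¬ (c < m ∧ ∀ x ∈ s :: l, x ≤ m) := by rintro ⟨h, _⟩; omega
              have c2 : ¬ (max t c < m ∧ ∀ x ∈ s :: l, x ≤ m) := by
                rintro ⟨h, _⟩; simp only [Nat.max_lt] at h; omega
              have c3 : ¬ (t < m ∧ ∀ x ∈ c :: s :: l, x ≤ m) := by
                rintro ⟨_, h⟩; have := h c (by simp); omega
              rw [IH1, if_neg c1, IH2, if_neg c2, if_neg c3]
              split <;> simp
          · have c1 : ¬ (c < m ∧ ∀ x ∈ s :: l, x ≤ m) := by rintro ⟨_, h⟩; exact hA h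
            have c2 : ¬ (max t c < m ∧ ∀ x ∈ s :: l, x ≤ m) := by rintro ⟨_, h⟩; exact hA h
            have c3 : ¬ (t < m ∧ ∀ x ∈ c :: s :: l, x ≤ m) := by
              rintro ⟨_, h⟩; exact hA (fun x hx => h x (List.mem_cons_of_mem _ hx))
            rw [IH1, if_neg c1, IH2, if_neg c2, if_neg c3]
            split <;> simp

theorem ltr_filter : ∀ (l : List ℕ) (t : ℕ),
    ((List.range l.length).filter fun j =>
      decide (t < l.getD j 0 ∧ ∀ i < j, l.getD i 0 < l.getD j 0)).length = ltr t l := by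
  intro l
  induction l with
  | nil => intro t; simp [ltr]
  | cons a l ih =>
      intro t
      rw [List.length_cons, List.range_succ_eq_map, List.filter_cons, List.filter_map]
      have hcomp : ∀ j ∈ List.range l.length,
          ((fun j => decide (t < (a :: l).getD j 0 ∧
              ∀ i < j, (a :: l).getD i 0 < (a :: l).getD j 0)) ∘ Nat.succ) j
          = (fun j => decide (max t a < l.getD j 0 ∧ ∀ i < j, l.getD i 0 < l.getD j 0)) j := by
        intro j _
        simp only [Function.comp_apply, decide_eq_decide]
        constructor
        · rintro ⟨h1, h2⟩
          have ha : a < l.getD j 0 := by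
            have := h2 0 (Nat.succ_pos j)
            simpa using this
          refine ⟨by simp only [List.getD_cons_succ] at h1; omega, ?_⟩
          intro i hi
          have := h2 (i + 1) (by omega)
          simpa using this
        · rintro ⟨h1, h2⟩
          rw [Nat.max_lt] at h1
          refine ⟨by simpa using h1.1, ?_⟩
          intro i hi
          cases i with
          | zero => simpa using h1.2
          | succ i => simp only [List.getD_cons_succ]; exact h2 i (by omega)
      rw [List.filter_congr hcomp]
      by_cases h : t < a
      · rw [if_pos (by simp [h])]
        simp only [List.length_cons, List.length_map, ltr, if_pos h]
        rw [ih (max t a)]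
        omega
      · rw [if_neg (by simp [h])]
        simp only [List.length_map, ltr, if_neg h]
        rw [ih (max t a)]
        omega

theorem ltrCount_eq (l : List ℕ) (hpos : ∀ x ∈ l, 0 < x) : ltrCount l = ltr 0 l := by
  rw [← ltr_filter l 0]
  unfold ltrCount
  congr 1
  apply List.filter_congr
  intro j hj
  rw [List.mem_range] at hj
  simp only [decide_eq_decide]
  unfold IsLTRMax
  constructor
  · rintro ⟨h1, h2⟩
    refine ⟨?_, h2⟩
    rw [List.getD_eq_getElem l 0 hj]
    exact hpos _ (List.getElem_mem hj)
  · rintro ⟨h1, h2⟩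
    exact ⟨hj, h2⟩

/-- For `k ≥ 1`, a permutation of size `n ≥ 1` has exactly `2^(k-1)` bubblesort preimages
iff it ends with its maximum and has exactly `k` left-to-right maxima. -/
theorem stmt_6 (n k : ℕ) (hn : 1 ≤ n) (hk : 1 ≤ k) (σ : List ℕ) (hσ : IsPermList n σ) :
    Set.ncard {τ : List ℕ | IsPermList n τ ∧ bpass τ = σ} = 2 ^ (k - 1) ↔
      (σ.getLast? = some n ∧ ltrCount σ = k) := by
  have hidnd : (idList n).Nodup :=
    (List.nodup_range : (List.range n).Nodup).map (fun a b h => by omega)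
  have hσnd : σ.Nodup := hσ.nodup_iff.mpr hidnd
  have hmem : ∀ x ∈ σ, 1 ≤ x ∧ x ≤ n := by
    intro x hx
    have : x ∈ idList n := hσ.mem_iff.mp hx
    simp only [idList, List.mem_map, List.mem_range] at this
    obtain ⟨i, hi, rfl⟩ := this
    omega
  have hnσ : n ∈ σ := by
    apply hσ.mem_iff.mpr
    simp only [idList, List.mem_map, List.mem_range]
    exact ⟨n - 1, by omega, by omega⟩
  have hne : σ ≠ [] := List.ne_nil_of_mem hnσ
  have hm : σ.getLast? = some (σ.getLast hne) := List.getLast?_eq_getLast_of_ne_nil hne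
  set m := σ.getLast hne with hmdef
  have hmσ : m ∈ σ := List.getLast_mem hne
  have hset : {τ : List ℕ | IsPermList n τ ∧ bpass τ = σ} = ((P 0 σ).toFinset : Set (List ℕ)) := by
    ext τ
    simp only [Set.mem_setOf_eq, List.coe_toFinset]
    rw [mem_P σ hσnd]
    constructor
    · rintro ⟨hp, hb⟩
      refine ⟨hb, ?_⟩
      have hτne : τ ≠ [] := by
        intro he
        rw [he] at hb
        apply hne
        rw [← hb]
        simp [bpass]
      obtain ⟨h, tl, rfl⟩ := List.exists_cons_of_ne_nil hτne
      have hperm : σ.Perm (h :: tl) := hb ▸ bpass_perm (h :: tl)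
      have : h ∈ σ := hperm.mem_iff.mpr (by simp)
      simp only [List.headI]
      exact (hmem h this).1
    · rintro ⟨hb, _⟩
      refine ⟨?_, hb⟩
      have hp : σ.Perm τ := hb ▸ bpass_perm τ
      exact hp.symm.trans hσ
  rw [hset, Set.ncard_coe_finset, List.toFinset_card_of_nodup (nodup_P σ hσnd 0),
    count_P σ hσnd 0 m hm]
  have hln : σ.getLast? = some n ↔ m = n := by
    rw [hm]
    simp
  have hpos : ∀ x ∈ σ, 0 < x := fun x hx => (hmem x hx).1
  constructor
  · intro hcd
    by_cases hc : 0 < m ∧ ∀ x ∈ σ, x ≤ m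
    · rw [if_pos hc] at hcd
      have hmn : m = n := le_antisymm ((hmem m hmσ).2) (hc.2 n hnσ)
      refine ⟨hln.mpr hmn, ?_⟩
      have h1 : 1 ≤ ltr 0 σ := ltr_pos σ 0 n hnσ hn
      have h2 : ltr 0 σ - 1 = k - 1 := Nat.pow_right_injective (le_refl 2) hcd
      rw [ltrCount_eq σ hpos]
      omega
    · rw [if_neg hc] at hcd
      exact absurd hcd.symm (pow_ne_zero _ two_ne_zero)
  · rintro ⟨hl, hk'⟩
    have hmn : m = n := hln.mp hl
    rw [if_pos ⟨by omega, fun x hx => hmn ▸ (hmem x hx).2⟩]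
    rw [← hk', ltrCount_eq σ hpos]
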